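/- Let σ>0, λ>0, x>0 and γ∈ℝ with λx²γ<1. Then sup_{a∈[0,∞)} [ (1/2) a x² γ − (1/(2λ)) (√a − σ)² ] = σ² x² γ / (2(1 − λ x² γ)). In other words, the market-impact Hamiltonian H(x,γ) admits the Bellman (dual) representation H(x,γ) = sup_{a≥0} [ (1/2) a x² γ − (1/(2λ))(√a − σ)² ] on its finiteness domain. -/

import Mathlib

/-- Dual (Bellman) representation of the market-impact Hamiltonian: for `λx²γ < 1`,
`sup_{a ≥ 0} [ (1/2) a x² γ − (1/(2λ)) (√a − σ)² ] = σ² x² γ / (2(1 − λ x² γ))`. -/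
theorem market_impact_hamiltonian_dual
    (σ lam x γ : ℝ) (hσ : 0 < σ) (hlam : 0 < lam) (hx : 0 < x)
    (hγ : lam * x ^ 2 * γ < 1) :
    sSup {v : ℝ | ∃ a : ℝ, 0 ≤ a ∧
        v = (1 / 2) * a * x ^ 2 * γ - (1 / (2 * lam)) * (Real.sqrt a - σ) ^ 2}
      = σ ^ 2 * x ^ 2 * γ / (2 * (1 - lam * x ^ 2 * γ)) := by
  have h1 : 0 < 1 - lam * x ^ 2 * γ := by linarith
  have hstar : 0 ≤ σ / (1 - lam * x ^ 2 * γ) := le_of_lt (div_pos hσ h1)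
  apply IsGreatest.csSup_eq
  constructor
  · refine ⟨(σ / (1 - lam * x ^ 2 * γ)) ^ 2, sq_nonneg _, ?_⟩
    rw [Real.sqrt_sq hstar]
    rw [show σ / (1 - lam * x ^ 2 * γ) - σ = σ * (lam * x ^ 2 * γ) / (1 - lam * x ^ 2 * γ) by field_simp; ring]
    field_simp
  · rintro v ⟨a, ha, rfl⟩
    have hs := Real.sqrt_nonneg a
    have hsq : Real.sqrt a ^ 2 = a := Real.sq_sqrt ha
    rw [← hsq]
    set s := Real.sqrt a
    rw [Real.sqrt_sq hs, le_div_iff₀ (by positivity)]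
    have key : σ ^ 2 * x ^ 2 * γ -
        (1 / 2 * s ^ 2 * x ^ 2 * γ - 1 / (2 * lam) * (s - σ) ^ 2) *
          (2 * (1 - lam * x ^ 2 * γ)) =
        (s * (1 - lam * x ^ 2 * γ) - σ) ^ 2 / lam := by
      field_simp
      ring
    have hnn : 0 ≤ (s * (1 - lam * x ^ 2 * γ) - σ) ^ 2 / lam := by positivity
    linarith
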